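/- For bounded linear operators A, B, C, D on a complex Hilbert space H, w([[A, B],[C, D]]) ≤ (w(A) + w(D) + √((w(A) − w(D))² + (‖B‖ + ‖C‖)²))/2. -/

import Mathlib

/-- The numerical radius of a bounded linear operator on a complex Hilbert space:
`w(T) = sup {|⟨Tx, x⟩| : ‖x‖ = 1}`. -/
noncomputable def numRad {H : Type*} [NormedAddCommGroup H] [InnerProductSpace ℂ H]
    (T : H →L[ℂ] H) : ℝ :=
  sSup {r : ℝ | ∃ x : H, ‖x‖ = 1 ∧ r = ‖(inner ℂ (T x) x : ℂ)‖}

/-- The absolute value `|T| = (T*T)^{1/2}` of a bounded operator. -/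
noncomputable def absOp {H : Type*} [NormedAddCommGroup H] [InnerProductSpace ℂ H]
    [CompleteSpace H] (T : H →L[ℂ] H) : H →L[ℂ] H :=
  CFC.sqrt (ContinuousLinearMap.adjoint T * T)

/-- The numerical radius of a complex `n × n` matrix. -/
noncomputable def numRadMat {n : ℕ} (M : Matrix (Fin n) (Fin n) ℂ) : ℝ :=
  numRad (Matrix.toEuclideanCLM (𝕜 := ℂ) M)

lemma numRad_nonneg' {H : Type*} [NormedAddCommGroup H] [InnerProductSpace ℂ H]
    (T : H →L[ℂ] H) : 0 ≤ numRad T :=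
  Real.sSup_nonneg (by rintro r ⟨x, hx, rfl⟩; positivity)

lemma numRad_bdd' {H : Type*} [NormedAddCommGroup H] [InnerProductSpace ℂ H]
    (T : H →L[ℂ] H) :
    BddAbove {r : ℝ | ∃ x : H, ‖x‖ = 1 ∧ r = ‖(inner ℂ (T x) x : ℂ)‖} := by
  refine ⟨‖T‖, ?_⟩
  rintro r ⟨x, hx, rfl⟩
  calc ‖(inner ℂ (T x) x : ℂ)‖ ≤ ‖T x‖ * ‖x‖ := norm_inner_le_norm _ _
    _ ≤ ‖T‖ * ‖x‖ * ‖x‖ := by gcongr; exact T.le_opNorm x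
    _ = ‖T‖ := by rw [hx]; ring

lemma inner_le_numRad' {H : Type*} [NormedAddCommGroup H] [InnerProductSpace ℂ H]
    (T : H →L[ℂ] H) (x : H) : ‖(inner ℂ (T x) x : ℂ)‖ ≤ numRad T * ‖x‖ ^ 2 := by
  rcases eq_or_ne x 0 with rfl | hx
  · simp
  · have hnx : (0:ℝ) < ‖x‖ := norm_pos_iff.2 hx
    set c : ℂ := (‖x‖ : ℂ)⁻¹ with hc
    have hcn : ‖c‖ = ‖x‖⁻¹ := by
      simp [hc]
    have hu : ‖c • x‖ = 1 := by
      rw [norm_smul, hcn, inv_mul_cancel₀ hnx.ne']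
    have key : ‖(inner ℂ (T (c • x)) (c • x) : ℂ)‖
        = ‖x‖⁻¹ ^ 2 * ‖(inner ℂ (T x) x : ℂ)‖ := by
      rw [map_smul, inner_smul_left, inner_smul_right, norm_mul, norm_mul,
        RCLike.norm_conj, hcn]
      ring
    have hle : ‖(inner ℂ (T (c • x)) (c • x) : ℂ)‖ ≤ numRad T :=
      le_csSup (numRad_bdd' T) ⟨c • x, hu, rfl⟩
    rw [key] at hle
    have h2 : ‖(inner ℂ (T x) x : ℂ)‖ = ‖x‖ ^ 2 * (‖x‖⁻¹ ^ 2 * ‖(inner ℂ (T x) x : ℂ)‖) := by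
      field_simp
    rw [h2]
    calc ‖x‖ ^ 2 * (‖x‖⁻¹ ^ 2 * ‖(inner ℂ (T x) x : ℂ)‖) ≤ ‖x‖ ^ 2 * numRad T := by
          gcongr
      _ = numRad T * ‖x‖ ^ 2 := by ring

lemma scalar_ineq (α δ β s t : ℝ) (hst : s ^ 2 + t ^ 2 = 1) (hs : 0 ≤ s) (ht : 0 ≤ t) :
    α * s ^ 2 + δ * t ^ 2 + β * (s * t) ≤ (α + δ + Real.sqrt ((α - δ) ^ 2 + β ^ 2)) / 2 := by
  have hE2 := Real.sq_sqrt (by positivity : (0:ℝ) ≤ (α - δ) ^ 2 + β ^ 2)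
  have hE0 := Real.sqrt_nonneg ((α - δ) ^ 2 + β ^ 2)
  set E := Real.sqrt ((α - δ) ^ 2 + β ^ 2) with hE
  set X := (α - δ) * (s ^ 2 - t ^ 2) + β * (2 * s * t) with hX
  have h1 : (s ^ 2 + t ^ 2) ^ 2 = 1 := by rw [hst]; norm_num
  have h2 : ((α - δ) ^ 2 + β ^ 2) * ((s ^ 2 - t ^ 2) ^ 2 + (2 * s * t) ^ 2)
      = (α - δ) ^ 2 + β ^ 2 := by
    have h3 : (s ^ 2 - t ^ 2) ^ 2 + (2 * s * t) ^ 2 = (s ^ 2 + t ^ 2) ^ 2 := by ring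
    rw [h3, h1, mul_one]
  have hX2 : X ^ 2 ≤ E ^ 2 := by
    rw [hE2, hX]
    nlinarith [sq_nonneg ((α - δ) * (2 * s * t) - β * (s ^ 2 - t ^ 2)), h2]
  have hXE : X ≤ E := le_of_sq_le_sq hX2 hE0
  have hid : α * s ^ 2 + δ * t ^ 2 + β * (s * t)
      = (α + δ) * (s ^ 2 + t ^ 2) / 2 + X / 2 := by rw [hX]; ring
  rw [hid, hst]
  linarith [hXE]

open ContinuousLinearMap
theorem stmt10 {H : Type*} [NormedAddCommGroup H] [InnerProductSpace ℂ H] [CompleteSpace H]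
    (A B C D : H →L[ℂ] H)
    (T : PiLp 2 (fun _ : Fin 2 => H) →L[ℂ] PiLp 2 (fun _ : Fin 2 => H))
    (hT : ∀ x : PiLp 2 (fun _ : Fin 2 => H),
      T x 0 = A (x 0) + B (x 1) ∧ T x 1 = C (x 0) + D (x 1)) :
    numRad T ≤ (numRad A + numRad D +
      Real.sqrt ((numRad A - numRad D) ^ 2 + (‖B‖ + ‖C‖) ^ 2)) / 2 := by
  have hA0 := numRad_nonneg' A
  have hD0 := numRad_nonneg' D
  have hsq := Real.sqrt_nonneg ((numRad A - numRad D) ^ 2 + (‖B‖ + ‖C‖) ^ 2)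
  apply Real.sSup_le
  · rintro r ⟨x, hx, rfl⟩
    obtain ⟨h0, h1⟩ := hT x
    have hnorm : ‖x 0‖ ^ 2 + ‖x 1‖ ^ 2 = 1 := by
      have := PiLp.norm_sq_eq_of_L2 (fun _ : Fin 2 => H) x
      rw [hx] at this
      simpa [Fin.sum_univ_two] using this.symm
    have hinner : (inner ℂ (T x) x : ℂ)
        = inner ℂ (A (x 0)) (x 0) + inner ℂ (B (x 1)) (x 0)
          + (inner ℂ (C (x 0)) (x 1) + inner ℂ (D (x 1)) (x 1)) := by
      rw [PiLp.inner_apply, Fin.sum_univ_two, h0, h1, inner_add_left, inner_add_left]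
    have hb1 : ‖(inner ℂ (B (x 1)) (x 0) : ℂ)‖ ≤ ‖B‖ * (‖x 1‖ * ‖x 0‖) := by
      calc ‖(inner ℂ (B (x 1)) (x 0) : ℂ)‖ ≤ ‖B (x 1)‖ * ‖x 0‖ := norm_inner_le_norm _ _
        _ ≤ ‖B‖ * ‖x 1‖ * ‖x 0‖ := by gcongr; exact B.le_opNorm _
        _ = ‖B‖ * (‖x 1‖ * ‖x 0‖) := by ring
    have hc1 : ‖(inner ℂ (C (x 0)) (x 1) : ℂ)‖ ≤ ‖C‖ * (‖x 0‖ * ‖x 1‖) := by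
      calc ‖(inner ℂ (C (x 0)) (x 1) : ℂ)‖ ≤ ‖C (x 0)‖ * ‖x 1‖ := norm_inner_le_norm _ _
        _ ≤ ‖C‖ * ‖x 0‖ * ‖x 1‖ := by gcongr; exact C.le_opNorm _
        _ = ‖C‖ * (‖x 0‖ * ‖x 1‖) := by ring
    have ha1 := inner_le_numRad' A (x 0)
    have hd1 := inner_le_numRad' D (x 1)
    have htri : ‖(inner ℂ (T x) x : ℂ)‖
        ≤ numRad A * ‖x 0‖ ^ 2 + numRad D * ‖x 1‖ ^ 2
          + (‖B‖ + ‖C‖) * (‖x 0‖ * ‖x 1‖) := by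
      rw [hinner]
      have := norm_add_le (inner ℂ (A (x 0)) (x 0) + inner ℂ (B (x 1)) (x 0) : ℂ)
        (inner ℂ (C (x 0)) (x 1) + inner ℂ (D (x 1)) (x 1) : ℂ)
      have h2 := norm_add_le (inner ℂ (A (x 0)) (x 0) : ℂ) (inner ℂ (B (x 1)) (x 0) : ℂ)
      have h3 := norm_add_le (inner ℂ (C (x 0)) (x 1) : ℂ) (inner ℂ (D (x 1)) (x 1) : ℂ)
      nlinarith [norm_nonneg (x 0), norm_nonneg (x 1)]
    calc ‖(inner ℂ (T x) x : ℂ)‖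
        ≤ numRad A * ‖x 0‖ ^ 2 + numRad D * ‖x 1‖ ^ 2
          + (‖B‖ + ‖C‖) * (‖x 0‖ * ‖x 1‖) := htri
      _ ≤ _ := scalar_ineq _ _ _ _ _ hnorm (norm_nonneg _) (norm_nonneg _)
  · linarith
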